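/- The circle product on the Hochschild complex is graded pre-Lie: for all x ∈ C^m(A,A), y ∈ C^n(A,A), z ∈ C^p(A,A), the associator is graded symmetric in the last two arguments with respect to shifted degrees, (x∘y)∘z − x∘(y∘z) = (−1)^{(n−1)(p−1)} ((x∘z)∘y − x∘(z∘y)). -/
import Mathlib

namespace Hochschild

/-- Hochschild `n`-cochains `C^n(A,A)` are modeled as functions on sequences
`ℕ → A` (with `a i` playing the role of the `(i+1)`-st argument `a_{i+1}`)
that depend only on the first `n` entries and are `K`-multilinear in them. -/
def IsCochain (K : Type*) [Field K] {A : Type*} [Ring A] [Algebra K A]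
    (n : ℕ) (x : (ℕ → A) → A) : Prop :=
  (∀ a b : ℕ → A, (∀ i, i < n → a i = b i) → x a = x b) ∧
  (∀ (a : ℕ → A) (i : ℕ), i < n → ∀ u v : A,
      x (Function.update a i (u + v)) =
        x (Function.update a i u) + x (Function.update a i v)) ∧
  (∀ (a : ℕ → A) (i : ℕ), i < n → ∀ (c : K) (u : A),
      x (Function.update a i (c • u)) = c • x (Function.update a i u))

variable {A : Type*} [Ring A]

/-- The Hochschild differential of a degree-`n` cochain:
`(dx)(a_1,…,a_{n+1}) = a_1 x(a_2,…,a_{n+1}) + ∑_{i=1}^n (−1)^i x(a_1,…,a_i a_{i+1},…,a_{n+1})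
  − (−1)^n x(a_1,…,a_n) a_{n+1}`. -/
def hd (n : ℕ) (x : (ℕ → A) → A) : (ℕ → A) → A := fun a =>
  a 0 * x (fun j => a (j + 1))
    + ∑ i ∈ Finset.range n, ((-1 : ℤ) ^ (i + 1)) •
        x (fun j => if j < i then a j else if j = i then a i * a (i + 1) else a (j + 1))
    - ((-1 : ℤ) ^ n) • (x a * a n)

/-- The cup product `(x·y)(a_1,…,a_{k+l}) = x(a_1,…,a_k) y(a_{k+1},…,a_{k+l})`;
the parameter `m` is the degree of the first factor `x`. -/
def cup (m : ℕ) (x y : (ℕ → A) → A) : (ℕ → A) → A := fun a =>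
  x a * y (fun j => a (j + m))

/-- In the brace substitution determined by the strictly increasing insertion
positions `j`, the index in the ambient input sequence at which the argument
fed into slot `s` of the outer cochain starts; for an inserted cochain at
slot `j p` this is the number `i_p` of inputs preceding it. -/
def braceOff {n : ℕ} (ys : List (ℕ × ((ℕ → A) → A))) (j : Fin ys.length → Fin n)
    (s : ℕ) : ℕ :=
  (s - (Finset.univ.filter fun q : Fin ys.length => (j q : ℕ) < s).card)
    + ∑ q ∈ Finset.univ.filter (fun q : Fin ys.length => (j q : ℕ) < s), (ys.get q).1

/-- The brace operation `{x}{y_1,…,y_m}`, where `x` has degree `n` and the `y_p`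
are listed together with their degrees:
`{x}{y_1,…,y_m}(a_1,…,a_M) = ∑ (−1)^ε x(a_1,…,a_{i_1}, y_1(a_{i_1+1},…),…)`,
the sum being over all order-preserving substitutions of `y_1,…,y_m` into the
slots of `x`, with `ε = ∑_p (|y_p|−1) i_p`. -/
def brace (n : ℕ) (x : (ℕ → A) → A) (ys : List (ℕ × ((ℕ → A) → A))) :
    (ℕ → A) → A := fun a =>
  ∑ j ∈ Finset.univ.filter
      (fun j : Fin ys.length → Fin n => ∀ p q : Fin ys.length, p < q → j p < j q),
    ((-1 : ℤ) ^ (∑ p : Fin ys.length, ((ys.get p).1 + 1) * braceOff ys j (j p))) •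
      x (fun s =>
        (if (Finset.univ.filter fun p : Fin ys.length => (j p : ℕ) = s) = ∅ then
            a (braceOff ys j s)
          else 0)
        + ∑ p ∈ Finset.univ.filter (fun p : Fin ys.length => (j p : ℕ) = s),
            (ys.get p).2 (fun t => a (t + braceOff ys j s)))

/-- The circle product `x ∘ y := {x}{y}`, with `m = |x|`, `p = |y|`. -/
def circ (m p : ℕ) (x y : (ℕ → A) → A) : (ℕ → A) → A := brace m x [(p, y)]

/-- The Gerstenhaber bracket `[x,y] := x∘y − (−1)^{(|x|−1)(|y|−1)} y∘x`,
with `m = |x|`, `p = |y|`. -/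
def gbr (m p : ℕ) (x y : (ℕ → A) → A) : (ℕ → A) → A := fun a =>
  circ m p x y a - ((-1 : ℤ) ^ ((m + 1) * (p + 1))) • circ p m y x a



section Aux

variable {K : Type*} [Field K] {A' : Type*} [Ring A'] [Algebra K A']

/-- insertion of `y` (of degree `n`) at slot `i` into the argument sequence `a` -/
def cins (n : ℕ) (y : (ℕ → A') → A') (a : ℕ → A') (i : ℕ) : ℕ → A' := fun s =>
  if s < i then a s else if s = i then y (fun t => a (t + i)) else a (s - 1 + n)

theorem circ_apply (m n : ℕ) (x y : (ℕ → A') → A') (a : ℕ → A') :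
    circ m n x y a = ∑ i ∈ Finset.range m, ((-1 : ℤ)) ^ ((n + 1) * i) • x (cins n y a i) := by
  unfold circ brace
  have hq0 : (0 : ℕ) < [((n : ℕ), y)].length := by simp
  set q0 : Fin [((n : ℕ), y)].length := ⟨0, hq0⟩ with hq0def
  have huniv : (Finset.univ : Finset (Fin [((n : ℕ), y)].length)) = {q0} := by
    apply Finset.eq_singleton_iff_unique_mem.2
    refine ⟨Finset.mem_univ _, fun q _ => Fin.ext ?_⟩
    have := q.2
    simp at this
    simp [hq0def, this]
  refine Finset.sum_bij' (i := fun j _ => ((j q0 : ℕ)))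
    (j := fun i hi => fun _ => ⟨i, Finset.mem_range.1 hi⟩) ?_ ?_ ?_ ?_ ?_
  · intro j _; exact Finset.mem_range.2 (j q0).isLt
  · intro b hb
    refine Finset.mem_filter.2 ⟨Finset.mem_univ _, fun pp qq hpq => absurd hpq ?_⟩
    have h1 : (pp : ℕ) < 1 := by simpa using pp.2
    have h2 : (qq : ℕ) < 1 := by simpa using qq.2
    rw [Fin.lt_def]; omega
  · intro j hj
    funext q
    have hqq : q = q0 := Fin.ext (by have := q.2; simp at this; simp [hq0def, this])
    rw [hqq]
  · intro b hb; rfl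
  · intro j hj
    have hoff : ∀ s : ℕ, braceOff [((n : ℕ), y)] j s
        = if (j q0 : ℕ) < s then s - 1 + n else s := by
      intro s
      unfold braceOff
      rw [huniv, Finset.filter_singleton]
      by_cases h : (j q0 : ℕ) < s <;> simp [h]
    congr 1
    · congr 1
      rw [huniv, Finset.sum_singleton, hoff]
      simp
    · congr 1
      funext s
      rw [huniv, Finset.filter_singleton]
      rcases lt_trichotomy ((j q0 : ℕ)) s with h | h | h
      · have hne : (j q0 : ℕ) ≠ s := by omega
        simp [cins, hoff, hne, h]
        rw [if_neg (by omega), if_neg (by omega)]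
      · subst h
        simp [cins, hoff]
      · have hne : (j q0 : ℕ) ≠ s := by omega
        simp [cins, hoff, hne, h]
        rw [if_neg (by omega)]

theorem decompose {M : Type*} [AddCommMonoid M] (m n : ℕ) (F : ℕ → ℕ → M) :
    ∑ q ∈ (Finset.range (m + n - 1)) ×ˢ (Finset.range m), F q.1 q.2
    = (∑ q ∈ (Finset.range m).sigma (fun _ => Finset.range n), F (q.1 + q.2) q.1)
      + (∑ q ∈ (Finset.range m).sigma (fun i => Finset.range i), F q.2 q.1)
      + (∑ q ∈ (Finset.range m).sigma (fun j => Finset.range j), F (q.1 - 1 + n) q.2) := by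
  classical
  set S := (Finset.range (m + n - 1)) ×ˢ (Finset.range m) with hS
  rw [← Finset.sum_filter_add_sum_filter_not S (fun q => q.1 < q.2) (fun q => F q.1 q.2)]
  rw [← Finset.sum_filter_add_sum_filter_not (S.filter (fun q => ¬ q.1 < q.2))
      (fun q => q.1 < q.2 + n) (fun q => F q.1 q.2)]
  have hB : ∑ q ∈ S.filter (fun q => q.1 < q.2), F q.1 q.2
      = ∑ q ∈ (Finset.range m).sigma (fun i => Finset.range i), F q.2 q.1 := by
    refine Finset.sum_nbij' (i := fun q => ⟨q.2, q.1⟩) (j := fun q => (q.2, q.1)) ?_ ?_ ?_ ?_ ?_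
    · intro q hq
      simp only [hS, Finset.mem_filter, Finset.mem_product, Finset.mem_range] at hq
      simp only [Finset.mem_sigma, Finset.mem_range]; omega
    · intro q hq
      simp only [Finset.mem_sigma, Finset.mem_range] at hq
      simp only [hS, Finset.mem_filter, Finset.mem_product, Finset.mem_range]; omega
    · intro q _; rfl
    · intro q _; rfl
    · intro q _; rfl
  have hA : ∑ q ∈ (S.filter (fun q => ¬ q.1 < q.2)).filter (fun q => q.1 < q.2 + n), F q.1 q.2
      = ∑ q ∈ (Finset.range m).sigma (fun _ => Finset.range n), F (q.1 + q.2) q.1 := by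
    refine Finset.sum_nbij' (i := fun q => ⟨q.2, q.1 - q.2⟩) (j := fun q => (q.1 + q.2, q.1)) ?_ ?_ ?_ ?_ ?_
    · intro q hq
      simp only [hS, Finset.mem_filter, Finset.mem_product, Finset.mem_range] at hq
      simp only [Finset.mem_sigma, Finset.mem_range]; omega
    · intro q hq
      simp only [Finset.mem_sigma, Finset.mem_range] at hq
      simp only [hS, Finset.mem_filter, Finset.mem_product, Finset.mem_range]; omega
    · intro q hq
      simp only [hS, Finset.mem_filter, Finset.mem_product, Finset.mem_range] at hq
      have h1 : q.2 + (q.1 - q.2) = q.1 := by omega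
      simp only [h1]
    · intro q hq
      simp only [Finset.mem_sigma, Finset.mem_range] at hq
      simp only [Nat.add_sub_cancel_left]
    · intro q hq
      simp only [hS, Finset.mem_filter, Finset.mem_product, Finset.mem_range] at hq
      have h1 : q.2 + (q.1 - q.2) = q.1 := by omega
      rw [h1]
  have hC : ∑ q ∈ (S.filter (fun q => ¬ q.1 < q.2)).filter (fun q => ¬ q.1 < q.2 + n), F q.1 q.2
      = ∑ q ∈ (Finset.range m).sigma (fun j => Finset.range j), F (q.1 - 1 + n) q.2 := by
    refine Finset.sum_nbij' (i := fun q => ⟨q.1 + 1 - n, q.2⟩) (j := fun q => (q.1 - 1 + n, q.2)) ?_ ?_ ?_ ?_ ?_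
    · intro q hq
      simp only [hS, Finset.mem_filter, Finset.mem_product, Finset.mem_range] at hq
      simp only [Finset.mem_sigma, Finset.mem_range]; omega
    · intro q hq
      simp only [Finset.mem_sigma, Finset.mem_range] at hq
      simp only [hS, Finset.mem_filter, Finset.mem_product, Finset.mem_range]; omega
    · intro q hq
      simp only [hS, Finset.mem_filter, Finset.mem_product, Finset.mem_range] at hq
      have h1 : q.1 + 1 - n - 1 + n = q.1 := by omega
      simp only [h1]
    · intro q hq
      simp only [Finset.mem_sigma, Finset.mem_range] at hq
      have h1 : q.1 - 1 + n + 1 - n = q.1 := by omega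
      simp only [h1]
    · intro q hq
      simp only [hS, Finset.mem_filter, Finset.mem_product, Finset.mem_range] at hq
      have h1 : q.1 + 1 - n - 1 + n = q.1 := by omega
      rw [h1]
  rw [hB, hA, hC]
  abel

theorem neg_one_pow_add_two_mul (a b : ℕ) : ((-1 : ℤ)) ^ (a + 2 * b) = (-1) ^ a := by
  rw [pow_add, pow_mul, neg_one_sq, one_pow, mul_one]

theorem x_update_zsmul_sum {m : ℕ} {x : (ℕ → A') → A'} (hx : IsCochain K m x)
    {i : ℕ} (hi : i < m) (g : ℕ → A') {ι : Type*} (s : Finset ι) (c : ι → ℤ) (v : ι → A') :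
    x (Function.update g i (∑ r ∈ s, c r • v r)) = ∑ r ∈ s, c r • x (Function.update g i (v r)) := by
  let φ : A' →+ A' := AddMonoidHom.mk' (fun u => x (Function.update g i u))
    (fun u v => hx.2.1 g i hi u v)
  have hφ : ∀ u : A', x (Function.update g i u) = φ u := fun _ => rfl
  rw [hφ, map_sum]
  refine Finset.sum_congr rfl fun r _ => ?_
  rw [map_zsmul, hφ]

theorem cross {n p : ℕ} (x y z : (ℕ → A') → A')
    (hy1 : ∀ f g : ℕ → A', (∀ t, t < n → f t = g t) → y f = y g)
    (a : ℕ → A') {i j : ℕ} (hij : i < j) :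
    x (cins n y (cins p z a (j - 1 + n)) i) = x (cins p z (cins n y a i) j) := by
  congr 1
  funext s
  simp only [cins]
  split_ifs <;>
    first
      | rfl
      | omega
      | (congr 1; omega)
      | (refine hy1 _ _ fun t ht => ?_
         split_ifs <;> first | rfl | omega | (congr 1; omega))
      | (congr 1
         funext t
         split_ifs <;> first | rfl | omega | (congr 1; omega))

theorem mid (m n p : ℕ) (x y z : (ℕ → A') → A') (hx : IsCochain K m x) (a : ℕ → A') :
    ∑ q ∈ (Finset.range m).sigma (fun _ => Finset.range n),
        ((-1 : ℤ)) ^ ((p + 1) * (q.1 + q.2) + (n + 1) * q.1) •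
          x (cins n y (cins p z a (q.1 + q.2)) q.1)
      = circ m (n + p - 1) x (circ n p y z) a := by
  rw [circ_apply, Finset.sum_sigma]
  refine Finset.sum_congr rfl fun i hi => ?_
  have him : i < m := Finset.mem_range.1 hi
  set g : ℕ → A' := cins (n + p - 1) (circ n p y z) a i with hg
  have hgi : g i = ∑ r ∈ Finset.range n,
      ((-1 : ℤ)) ^ ((p + 1) * r) • y (cins p z (fun t => a (t + i)) r) := by
    rw [hg]
    simp only [cins, lt_irrefl, if_false, if_pos rfl, if_true, eq_self_iff_true]
    rw [circ_apply]
  have hxg : x g = ∑ r ∈ Finset.range n,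
      ((-1 : ℤ)) ^ ((p + 1) * r) •
        x (Function.update g i (y (cins p z (fun t => a (t + i)) r))) := by
    conv_lhs => rw [← Function.update_eq_self i g, hgi]
    exact x_update_zsmul_sum hx him g (Finset.range n) _ _
  rw [hxg, Finset.smul_sum]
  refine Finset.sum_congr rfl fun r hr => ?_
  have hrn : r < n := Finset.mem_range.1 hr
  have hupd : Function.update g i (y (cins p z (fun t => a (t + i)) r))
      = cins n y (cins p z a (i + r)) i := by
    funext s
    rcases eq_or_ne s i with hsi | hsi
    · subst hsi
      rw [Function.update_self]
      simp only [cins]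
      split_ifs <;>
        first
          | rfl
          | omega
          | (congr 1; omega)
          | (congr 1
             funext t
             simp only [cins]
             split_ifs <;>
               first
                 | rfl
                 | omega
                 | (congr 1; omega)
                 | (congr 1; funext t'; congr 1; omega))
    · rw [Function.update_of_ne hsi, hg]
      simp only [cins]
      split_ifs <;> first | rfl | omega | (congr 1; omega)
  rw [hupd, smul_smul, ← pow_add]
  have hnp : n + p - 1 + 1 = n + p := by omega
  rw [hnp]
  have hE : (p + 1) * (i + r) + (n + 1) * i = ((n + p) * i + (p + 1) * r) + 2 * i := by ring
  rw [hE, neg_one_pow_add_two_mul]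

end Aux

/-- The circle product on the Hochschild complex is graded
pre-Lie: for all `x ∈ C^m(A,A)`, `y ∈ C^n(A,A)`, `z ∈ C^p(A,A)`, the associator
is graded symmetric in the last two arguments with respect to shifted degrees:
`(x∘y)∘z − x∘(y∘z) = (−1)^{(n−1)(p−1)} ((x∘z)∘y − x∘(z∘y))`. -/
theorem circ_graded_pre_lie
    {K A : Type*} [Field K] [Ring A] [Algebra K A]
    (m n p : ℕ) (x y z : (ℕ → A) → A)
    (hx : IsCochain K m x) (hy : IsCochain K n y) (hz : IsCochain K p z) :
    (fun a => circ (m + n - 1) p (circ m n x y) z a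
        - circ m (n + p - 1) x (circ n p y z) a)
      = fun a => ((-1 : ℤ) ^ ((n + 1) * (p + 1))) •
          (circ (m + p - 1) n (circ m p x z) y a
            - circ m (p + n - 1) x (circ p n z y) a) := by
  funext a
  have hL : circ (m + n - 1) p (circ m n x y) z a
      = (∑ q ∈ (Finset.range m).sigma (fun _ => Finset.range n),
            ((-1 : ℤ)) ^ ((p + 1) * (q.1 + q.2) + (n + 1) * q.1) •
              x (cins n y (cins p z a (q.1 + q.2)) q.1))
        + (∑ q ∈ (Finset.range m).sigma (fun i => Finset.range i),
            ((-1 : ℤ)) ^ ((p + 1) * q.2 + (n + 1) * q.1) •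
              x (cins n y (cins p z a q.2) q.1))
        + (∑ q ∈ (Finset.range m).sigma (fun j => Finset.range j),
            ((-1 : ℤ)) ^ ((p + 1) * (q.1 - 1 + n) + (n + 1) * q.2) •
              x (cins n y (cins p z a (q.1 - 1 + n)) q.2)) := by
    calc circ (m + n - 1) p (circ m n x y) z a
        = ∑ k ∈ Finset.range (m + n - 1),
            ((-1 : ℤ)) ^ ((p + 1) * k) • circ m n x y (cins p z a k) := circ_apply _ _ _ _ _
      _ = ∑ k ∈ Finset.range (m + n - 1), ∑ i ∈ Finset.range m,
            ((-1 : ℤ)) ^ ((p + 1) * k + (n + 1) * i) • x (cins n y (cins p z a k) i) := by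
          refine Finset.sum_congr rfl fun k _ => ?_
          rw [circ_apply, Finset.smul_sum]
          refine Finset.sum_congr rfl fun i _ => ?_
          rw [smul_smul, ← pow_add]
      _ = ∑ q ∈ (Finset.range (m + n - 1)) ×ˢ (Finset.range m),
            ((-1 : ℤ)) ^ ((p + 1) * q.1 + (n + 1) * q.2) •
              x (cins n y (cins p z a q.1) q.2) := by rw [Finset.sum_product]
      _ = _ := decompose m n (fun k i => ((-1 : ℤ)) ^ ((p + 1) * k + (n + 1) * i) •
              x (cins n y (cins p z a k) i))
  have hR : circ (m + p - 1) n (circ m p x z) y a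
      = (∑ q ∈ (Finset.range m).sigma (fun _ => Finset.range p),
            ((-1 : ℤ)) ^ ((n + 1) * (q.1 + q.2) + (p + 1) * q.1) •
              x (cins p z (cins n y a (q.1 + q.2)) q.1))
        + (∑ q ∈ (Finset.range m).sigma (fun i => Finset.range i),
            ((-1 : ℤ)) ^ ((n + 1) * q.2 + (p + 1) * q.1) •
              x (cins p z (cins n y a q.2) q.1))
        + (∑ q ∈ (Finset.range m).sigma (fun j => Finset.range j),
            ((-1 : ℤ)) ^ ((n + 1) * (q.1 - 1 + p) + (p + 1) * q.2) •
              x (cins p z (cins n y a (q.1 - 1 + p)) q.2)) := by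
    calc circ (m + p - 1) n (circ m p x z) y a
        = ∑ k ∈ Finset.range (m + p - 1),
            ((-1 : ℤ)) ^ ((n + 1) * k) • circ m p x z (cins n y a k) := circ_apply _ _ _ _ _
      _ = ∑ k ∈ Finset.range (m + p - 1), ∑ j ∈ Finset.range m,
            ((-1 : ℤ)) ^ ((n + 1) * k + (p + 1) * j) • x (cins p z (cins n y a k) j) := by
          refine Finset.sum_congr rfl fun k _ => ?_
          rw [circ_apply, Finset.smul_sum]
          refine Finset.sum_congr rfl fun i _ => ?_
          rw [smul_smul, ← pow_add]
      _ = ∑ q ∈ (Finset.range (m + p - 1)) ×ˢ (Finset.range m),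
            ((-1 : ℤ)) ^ ((n + 1) * q.1 + (p + 1) * q.2) •
              x (cins p z (cins n y a q.1) q.2) := by rw [Finset.sum_product]
      _ = _ := decompose m p (fun k j => ((-1 : ℤ)) ^ ((n + 1) * k + (p + 1) * j) •
              x (cins p z (cins n y a k) j))
  have hmidL := mid m n p x y z hx a
  have hmidR := mid m p n x z y hx a
  have hεC : (∑ q ∈ (Finset.range m).sigma (fun j => Finset.range j),
        ((-1 : ℤ)) ^ ((p + 1) * (q.1 - 1 + n) + (n + 1) * q.2) •
          x (cins n y (cins p z a (q.1 - 1 + n)) q.2))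
      = ((-1 : ℤ) ^ ((n + 1) * (p + 1))) •
          (∑ q ∈ (Finset.range m).sigma (fun i => Finset.range i),
            ((-1 : ℤ)) ^ ((n + 1) * q.2 + (p + 1) * q.1) •
              x (cins p z (cins n y a q.2) q.1)) := by
    rw [Finset.smul_sum]
    refine Finset.sum_congr rfl fun q hq => ?_
    obtain ⟨j, i⟩ := q
    simp only [Finset.mem_sigma, Finset.mem_range] at hq
    rw [cross x y z hy.1 a hq.2, smul_smul, ← pow_add]
    obtain ⟨j', rfl⟩ : ∃ j', j = j' + 1 := ⟨j - 1, by omega⟩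
    have h1 : j' + 1 - 1 + n = j' + n := by omega
    rw [h1]
    have hE : (n + 1) * (p + 1) + ((n + 1) * i + (p + 1) * (j' + 1))
        = ((p + 1) * (j' + n) + (n + 1) * i) + 2 * (p + 1) := by ring
    rw [hE, neg_one_pow_add_two_mul]
  have hεB : (∑ q ∈ (Finset.range m).sigma (fun i => Finset.range i),
        ((-1 : ℤ)) ^ ((p + 1) * q.2 + (n + 1) * q.1) •
          x (cins n y (cins p z a q.2) q.1))
      = ((-1 : ℤ) ^ ((n + 1) * (p + 1))) •
          (∑ q ∈ (Finset.range m).sigma (fun j => Finset.range j),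
            ((-1 : ℤ)) ^ ((n + 1) * (q.1 - 1 + p) + (p + 1) * q.2) •
              x (cins p z (cins n y a (q.1 - 1 + p)) q.2)) := by
    rw [Finset.smul_sum]
    refine Finset.sum_congr rfl fun q hq => ?_
    obtain ⟨i, k⟩ := q
    simp only [Finset.mem_sigma, Finset.mem_range] at hq
    rw [cross x z y hz.1 a hq.2, smul_smul, ← pow_add]
    obtain ⟨i', rfl⟩ : ∃ i', i = i' + 1 := ⟨i - 1, by omega⟩
    have h1 : i' + 1 - 1 + p = i' + p := by omega
    rw [h1]
    have hE : (n + 1) * (p + 1) + ((n + 1) * (i' + p) + (p + 1) * k)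
        = ((p + 1) * k + (n + 1) * (i' + 1)) + 2 * ((n + 1) * p) := by ring
    rw [hE, neg_one_pow_add_two_mul]
  rw [hL, hR, ← hmidL, ← hmidR, hεC, hεB, smul_sub, smul_add, smul_add]
  abel

end Hochschild
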